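/- In the generalized single-queue game with cost c_v(t) = h(F(t)) + n(v)·g(t), where h is increasing and continuously differentiable, any (differentiable, strictly decreasing) Nash equilibrium is unique and given by T(v) = g⁻¹( ∫_v^B h'(G(x))/n(x) dG(x) ). -/

import Mathlib

open MeasureTheory Set

lemma aux_deriv_nonneg (h h' : ℝ → ℝ)
    (hhmono : MonotoneOn h (Icc 0 1))
    (hhderiv : ∀ s ∈ Icc (0:ℝ) 1, HasDerivAt h (h' s) s) :
    ∀ s ∈ Icc (0:ℝ) 1, 0 ≤ h' s := by
  intro s hs
  have hd := (hasDerivAt_iff_tendsto_slope.1 (hhderiv s hs))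
  rcases lt_or_eq_of_le hs.2 with hs1 | hs1
  · -- s < 1 : use slope from the right
    have hd' : Filter.Tendsto (slope h s) (nhdsWithin s (Ioi s)) (nhds (h' s)) :=
      hd.mono_left (nhdsWithin_mono _ (fun t ht => ne_of_gt ht))
    refine ge_of_tendsto hd' ?_
    filter_upwards [Ioo_mem_nhdsGT hs1] with t ht
    rw [slope_def_field]
    apply div_nonneg _ (by linarith [ht.1] : (0:ℝ) ≤ t - s)
    have := hhmono hs ⟨le_trans hs.1 ht.1.le, ht.2.le⟩ ht.1.le
    linarith
  · -- s = 1 : use slope from the left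
    subst hs1
    have hd' : Filter.Tendsto (slope h 1) (nhdsWithin 1 (Iio 1)) (nhds (h' 1)) :=
      hd.mono_left (nhdsWithin_mono _ (fun t ht => ne_of_lt ht))
    refine ge_of_tendsto hd' ?_
    filter_upwards [Ioo_mem_nhdsLT (by norm_num : (0:ℝ) < 1)] with t ht
    rw [slope_def_field]
    have h1 := hhmono ⟨ht.1.le, ht.2.le⟩ (by norm_num : (1:ℝ) ∈ Icc (0:ℝ) 1) ht.2.le
    apply div_nonneg_of_nonpos (by linarith) (by linarith [ht.2])

lemma aux_cdf_continuous (μ : Measure ℝ) [IsProbabilityMeasure μ] [NullSingletonClass μ]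
    (G : ℝ → ℝ) (hG : ∀ v, G v = (μ (Iic v)).toReal) : Continuous G := by
  have hGeq : G = fun x => ProbabilityTheory.cdf μ x := by
    funext x; rw [hG, ProbabilityTheory.cdf_eq_real, measureReal_def]
  rw [hGeq]
  have hmono : Monotone (fun x => ProbabilityTheory.cdf μ x) := (ProbabilityTheory.cdf μ).mono
  refine continuous_iff_continuousAt.2 fun x => ?_
  rw [hmono.continuousAt_iff_leftLim_eq_rightLim]
  have h1 : Function.rightLim (fun x => ProbabilityTheory.cdf μ x) x = ProbabilityTheory.cdf μ x :=
    (ProbabilityTheory.cdf μ).rightLim_eq x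
  have hsing : (ProbabilityTheory.cdf μ).measure {x} = 0 := by
    rw [ProbabilityTheory.measure_cdf]; exact measure_singleton x
  rw [StieltjesFunction.measure_singleton, ENNReal.ofReal_eq_zero] at hsing
  have h2 : Function.leftLim (fun x => ProbabilityTheory.cdf μ x) x ≤ ProbabilityTheory.cdf μ x :=
    hmono.leftLim_le le_rfl
  rw [h1]
  have : Function.leftLim (fun x => ProbabilityTheory.cdf μ x) x
      = Function.leftLim (ProbabilityTheory.cdf μ) x := rfl
  rw [this] at h2 ⊢
  linarith


set_option maxHeartbeats 2000000 in
theorem stmt6 (A B : ℝ) (hAB : A ≤ B)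
    (μ : Measure ℝ) [IsProbabilityMeasure μ] [NullSingletonClass μ]
    (hsupp : μ (Icc A B) = 1)
    (n g F G T h h' : ℝ → ℝ)
    (hn : StrictMonoOn n (Icc A B))
    (hnpos : ∀ v ∈ Icc A B, 0 < n v)
    (hgmono : StrictMonoOn g (Ici 0))
    (hgdiff : ∀ t ∈ Ici (0:ℝ), DifferentiableAt ℝ g t)
    (hg0 : g 0 = 0)
    (hhmono : MonotoneOn h (Icc 0 1))
    (hhderiv : ∀ s ∈ Icc (0:ℝ) 1, HasDerivAt h (h' s) s)
    (hhcont : ContinuousOn h' (Icc 0 1))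
    (hG : ∀ v, G v = (μ (Iic v)).toReal)
    (hF : ∀ t, F t = (μ {x ∈ Icc A B | t ≤ T x}).toReal)
    (hTnonneg : ∀ v ∈ Icc A B, 0 ≤ T v)
    (hTanti : StrictAntiOn T (Icc A B))
    (hTdiff : ∀ v ∈ Icc A B, DifferentiableAt ℝ T v)
    (hNE : ∀ v ∈ Icc A B, ∀ t, 0 ≤ t →
      h (F (T v)) + n v * g (T v) ≤ h (F t) + n v * g t) :
    ∀ v ∈ Icc A B, g (T v) = ∫ x in Ioc v B, h' (G x) / n x ∂μ := by
  -- ### basic measure facts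
  have hABmem : A ∈ Icc A B := ⟨le_rfl, hAB⟩
  have hBmem : B ∈ Icc A B := ⟨hAB, le_rfl⟩
  have hnullc : μ (Icc A B)ᶜ = 0 := by
    rw [measure_compl measurableSet_Icc (measure_ne_top _ _), hsupp, measure_univ, tsub_self]
  have hIioA : μ (Iio A) = 0 :=
    measure_mono_null (fun x hx => by simp only [mem_compl_iff, mem_Icc]; intro hc; exact absurd hc.1 (not_le.2 hx)) hnullc
  have hIoiB : μ (Ioi B) = 0 :=
    measure_mono_null (fun x hx => by simp only [mem_compl_iff, mem_Icc]; intro hc; exact absurd hc.2 (not_le.2 hx)) hnullc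
  have hGmono : Monotone G := fun x y hxy => by
    rw [hG, hG]; exact ENNReal.toReal_mono (measure_ne_top _ _) (measure_mono (Iic_subset_Iic.2 hxy))
  have hG0 : ∀ x, 0 ≤ G x := fun x => by rw [hG]; exact ENNReal.toReal_nonneg
  have hG1 : ∀ x, G x ≤ 1 := fun x => by
    rw [hG]
    calc (μ (Iic x)).toReal ≤ (μ univ).toReal :=
          ENNReal.toReal_mono (measure_ne_top _ _) (measure_mono (subset_univ _))
      _ = 1 := by rw [measure_univ]; rfl
  have hGB : G B = 1 := by
    rw [hG]
    have : μ (Iic B) = 1 := by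
      have := measure_compl (measurableSet_Ioi (a := B)) (measure_ne_top μ _)
      rw [hIoiB, measure_univ, compl_Ioi] at this
      simpa using this
    rw [this]; rfl
  have hIocReal : ∀ a b : ℝ, a ≤ b → (μ (Ioc a b)).toReal = G b - G a := by
    intro a b hab
    have hU : μ (Iic a) + μ (Ioc a b) = μ (Iic b) := by
      rw [← measure_union (Iic_disjoint_Ioc le_rfl) measurableSet_Ioc, Iic_union_Ioc_eq_Iic hab]
    rw [hG, hG]
    have h1 := ENNReal.toReal_add (measure_ne_top μ (Iic a)) (measure_ne_top μ (Ioc a b))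
    rw [hU] at h1
    linarith [h1]
  have hGIcc : ∀ w, A ≤ w → G w = (μ (Icc A w)).toReal := by
    intro w hw
    have h1 : μ (Icc A w) = μ (Iic w) := by
      apply le_antisymm (measure_mono Icc_subset_Iic_self)
      calc μ (Iic w) ≤ μ (Iio A ∪ Icc A w) := measure_mono (fun x hx => by
            rcases lt_or_ge x A with hc | hc
            · exact Or.inl hc
            · exact Or.inr ⟨hc, hx⟩)
        _ ≤ μ (Iio A) + μ (Icc A w) := measure_union_le _ _
        _ = μ (Icc A w) := by rw [hIioA, zero_add]
    rw [hG, h1]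
  -- ### F(T w) = G w
  have hFT : ∀ w ∈ Icc A B, F (T w) = G w := by
    intro w hw
    have hset : {x ∈ Icc A B | T w ≤ T x} = Icc A w := by
      ext x
      simp only [mem_setOf_eq, mem_Icc]
      constructor
      · rintro ⟨⟨hx1, hx2⟩, hTx⟩
        refine ⟨hx1, ?_⟩
        by_contra hc
        push_neg at hc
        exact absurd (hTanti hw ⟨hx1, hx2⟩ hc) (not_lt.2 hTx)
      · rintro ⟨hx1, hx2⟩
        have hxm : x ∈ Icc A B := ⟨hx1, le_trans hx2 hw.2⟩
        exact ⟨⟨hx1, hxm.2⟩, hTanti.antitoneOn hxm hw hx2⟩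
    rw [hF, hset, hGIcc w hw.1]
  have hF0 : F 0 = 1 := by
    have hset : {x ∈ Icc A B | (0:ℝ) ≤ T x} = Icc A B := by
      ext x; simp only [mem_setOf_eq]
      exact ⟨fun hx => hx.1, fun hx => ⟨hx, hTnonneg x hx⟩⟩
    rw [hF, hset, hsupp]; rfl
  -- ### g(T B) = 0
  have hgTnonneg : ∀ w ∈ Icc A B, 0 ≤ g (T w) := by
    intro w hw
    rcases lt_or_eq_of_le (hTnonneg w hw) with h1 | h1
    · rw [← hg0]; exact (hgmono self_mem_Ici (hTnonneg w hw) h1).le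
    · rw [← h1, hg0]
  have huB : g (T B) = 0 := by
    have h1 := hNE B hBmem 0 le_rfl
    rw [hF0, hFT B hBmem, hGB, hg0, mul_zero] at h1
    have h2 : n B * g (T B) ≤ 0 := by linarith
    have h3 : g (T B) ≤ 0 := nonpos_of_mul_nonpos_right ?_ (hnpos B hBmem)
    · exact le_antisymm h3 (hgTnonneg B hBmem)
    · linarith [h2]
  -- ### key incentive inequalities
  have key2 : ∀ a ∈ Icc A B, ∀ b ∈ Icc A B, a ≤ b →
      n a * (g (T a) - g (T b)) ≤ h (G b) - h (G a) ∧
      h (G b) - h (G a) ≤ n b * (g (T a) - g (T b)) := by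
    intro a ha b hb hab
    have h1 := hNE a ha (T b) (hTnonneg b hb)
    have h2 := hNE b hb (T a) (hTnonneg a ha)
    rw [hFT a ha, hFT b hb] at h1 h2
    constructor <;> nlinarith [h1, h2]
  -- ### bounds on h'
  obtain ⟨C, hC⟩ := (isCompact_Icc (a := (0:ℝ)) (b := 1)).exists_bound_of_continuousOn hhcont
  have hC0 : 0 ≤ C := le_trans (norm_nonneg _) (hC 0 ⟨le_rfl, zero_le_one⟩)
  have hCabs : ∀ s ∈ Icc (0:ℝ) 1, |h' s| ≤ C := by
    intro s hs; have := hC s hs; rwa [Real.norm_eq_abs] at this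
  have hh'nonneg := aux_deriv_nonneg h h' hhmono hhderiv
  have hUC := (isCompact_Icc (a := (0:ℝ)) (b := 1)).uniformContinuousOn_of_continuous hhcont
  rw [Metric.uniformContinuousOn_iff] at hUC
  -- ### continuity of G
  have hGcont : Continuous G := aux_cdf_continuous μ G hG
  -- ### clamped versions
  set c : ℝ → ℝ := fun x => min B (max A x) with hc_def
  have hc_mem : ∀ x, c x ∈ Icc A B := fun x =>
    ⟨le_min hAB (le_max_left _ _), min_le_left _ _⟩
  have hc_mono : Monotone c := fun x y hxy =>
    min_le_min le_rfl (max_le_max le_rfl hxy)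
  have hc_eq : ∀ x ∈ Icc A B, c x = x := fun x hx => by
    rw [hc_def]; simp only; rw [max_eq_right hx.1, min_eq_right hx.2]
  set N : ℝ → ℝ := fun x => n (c x) with hN_def
  have hN_mono : Monotone N := fun x y hxy => hn.monotoneOn (hc_mem x) (hc_mem y) (hc_mono hxy)
  have hN_pos : ∀ x, 0 < N x := fun x => hnpos _ (hc_mem x)
  have hnA : 0 < n A := hnpos A hABmem
  have hN_ge : ∀ x, n A ≤ N x := fun x => hn.monotoneOn hABmem (hc_mem x) (hc_mem x).1
  set d : ℝ → ℝ := fun s => min 1 (max 0 s) with hd_def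
  have hd_mem : ∀ s, d s ∈ Icc (0:ℝ) 1 := fun s =>
    ⟨le_min zero_le_one (le_max_left _ _), min_le_left _ _⟩
  have hd_eq : ∀ s ∈ Icc (0:ℝ) 1, d s = s := fun s hs => by
    rw [hd_def]; simp only; rw [max_eq_right hs.1, min_eq_right hs.2]
  set H : ℝ → ℝ := fun s => h' (d s) with hH_def
  have hH_cont : Continuous H :=
    hhcont.comp_continuous (continuous_const.min (continuous_const.max continuous_id)) hd_mem
  have hG01 : ∀ x, G x ∈ Icc (0:ℝ) 1 := fun x => ⟨hG0 x, hG1 x⟩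
  have hH_eqG : ∀ x, H (G x) = h' (G x) := fun x => by rw [hH_def]; simp only; rw [hd_eq _ (hG01 x)]
  set f : ℝ → ℝ := fun x => H (G x) / N x with hf_def
  have hf_meas : Measurable f :=
    ((hH_cont.measurable).comp hGmono.measurable).div hN_mono.measurable
  have hf_bound : ∀ x, |f x| ≤ C / n A := by
    intro x
    rw [hf_def]; simp only [abs_div]
    apply div_le_div₀ hC0 (by rw [hH_eqG]; exact hCabs _ (hG01 x)) hnA
    rw [abs_of_pos (hN_pos x)]; exact hN_ge x
  have hf_int : Integrable f μ := by
    refine Integrable.mono' (integrable_const (C / n A)) hf_meas.aestronglyMeasurable ?_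
    exact ae_of_all _ fun x => by rw [Real.norm_eq_abs]; exact hf_bound x
  have hf_eq : ∀ x ∈ Icc A B, f x = h' (G x) / n x := by
    intro x hx
    rw [hf_def]; simp only; rw [hH_eqG, hN_def]; simp only; rw [hc_eq x hx]
  -- ### per-piece estimate
  have piece : ∀ ε > (0:ℝ), ∃ δ > (0:ℝ), ∀ a b : ℝ, a ∈ Icc A B → b ∈ Icc A B → a ≤ b →
      G b - G a ≤ δ →
      |(∫ x in Ioc a b, f x ∂μ) - (g (T a) - g (T b))| ≤
        C * (G b - G a) * (1 / n a - 1 / n b) + ε * (G b - G a) / n A := by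
    intro ε hε
    obtain ⟨δ', hδ'pos, hδ'⟩ := hUC ε hε
    refine ⟨δ' / 2, by linarith, ?_⟩
    intro a b ha hb hab hΔδ
    set Δ := G b - G a with hΔ_def
    have hΔ0 : 0 ≤ Δ := by rw [hΔ_def]; linarith [hGmono hab]
    -- MVT: get ξ
    obtain ⟨ξ, hξ01, hξab, hξ⟩ : ∃ ξ, ξ ∈ Icc (0:ℝ) 1 ∧ ξ ∈ Icc (G a) (G b) ∧
        h (G b) - h (G a) = h' ξ * Δ := by
      rcases lt_or_eq_of_le (hGmono hab) with hlt | heq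
      · have hsub : Icc (G a) (G b) ⊆ Icc (0:ℝ) 1 := fun s hs =>
          ⟨le_trans (hG0 a) hs.1, le_trans hs.2 (hG1 b)⟩
        have hcont : ContinuousOn h (Icc (G a) (G b)) := fun s hs =>
          ((hhderiv s (hsub hs)).continuousAt).continuousWithinAt
        obtain ⟨ξ, hξmem, hslope⟩ := exists_hasDerivAt_eq_slope h h' hlt hcont
          (fun s hs => hhderiv s (hsub (Ioo_subset_Icc_self hs)))
        refine ⟨ξ, hsub (Ioo_subset_Icc_self hξmem), Ioo_subset_Icc_self hξmem, ?_⟩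
        rw [hslope, hΔ_def, div_mul_cancel₀]
        exact ne_of_gt (by linarith)
      · refine ⟨G a, hG01 a, ⟨le_rfl, hGmono hab⟩, ?_⟩
        rw [← heq, hΔ_def, ← heq]
        ring
    have hξC : h' ξ ≤ C := le_trans (le_abs_self _) (hCabs ξ hξ01)
    have hξnn : 0 ≤ h' ξ := hh'nonneg ξ hξ01
    -- n values
    have hna : 0 < n a := hnpos a ha
    have hnb : 0 < n b := hnpos b hb
    have hnab : n a ≤ n b := hn.monotoneOn ha hb hab
    have hnAa : n A ≤ n a := hn.monotoneOn hABmem ha ha.1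
    -- pointwise bounds on f over Ioc a b
    have hpw : ∀ x ∈ Ioc a b, (h' ξ - ε) / n b ≤ f x ∧ f x ≤ (h' ξ + ε) / n a := by
      intro x hx
      have hxm : x ∈ Icc A B := ⟨le_trans ha.1 hx.1.le, le_trans hx.2 hb.2⟩
      have hGx : G a ≤ G x := hGmono hx.1.le
      have hGx' : G x ≤ G b := hGmono hx.2
      have hdist : dist (G x) ξ < δ' := by
        rw [Real.dist_eq, abs_lt]
        constructor <;> [linarith [hξab.2, hΔδ]; linarith [hξab.1, hΔδ]]
      have hclose := hδ' (G x) (hG01 x) ξ hξ01 hdist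
      rw [Real.dist_eq, abs_lt] at hclose
      have hnx : 0 < n x := hnpos x hxm
      have hnax : n a ≤ n x := hn.monotoneOn ha hxm hx.1.le
      have hnxb : n x ≤ n b := hn.monotoneOn hxm hb hx.2
      rw [hf_eq x hxm]
      constructor
      · rcases le_or_gt (h' ξ - ε) 0 with hneg | hpos
        · calc (h' ξ - ε) / n b ≤ 0 := div_nonpos_of_nonpos_of_nonneg hneg hnb.le
            _ ≤ h' (G x) / n x := div_nonneg (hh'nonneg _ (hG01 x)) hnx.le
        · calc (h' ξ - ε) / n b ≤ (h' ξ - ε) / n x :=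
              (div_le_div_iff_of_pos_left hpos hnb hnx).2 hnxb
            _ ≤ h' (G x) / n x :=
              (div_le_div_iff_of_pos_right hnx).2 (by linarith [hclose.1])
      · calc h' (G x) / n x ≤ (h' ξ + ε) / n x :=
            (div_le_div_iff_of_pos_right hnx).2 (by linarith [hclose.2])
          _ ≤ (h' ξ + ε) / n a :=
            (div_le_div_iff_of_pos_left (by linarith [hξnn]) hnx hna).2 hnax
    -- integral bounds
    have hmeas : MeasurableSet (Ioc a b) := measurableSet_Ioc
    have hμab : (μ (Ioc a b)).toReal = Δ := hIocReal a b hab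
    have hIub : (∫ x in Ioc a b, f x ∂μ) ≤ (h' ξ + ε) / n a * Δ := by
      calc (∫ x in Ioc a b, f x ∂μ) ≤ ∫ x in Ioc a b, ((h' ξ + ε) / n a) ∂μ :=
            setIntegral_mono_on hf_int.integrableOn (integrable_const _).integrableOn hmeas
              (fun x hx => (hpw x hx).2)
        _ = (h' ξ + ε) / n a * Δ := by rw [setIntegral_const, measureReal_def, hμab, smul_eq_mul, mul_comm]
    have hIlb : (h' ξ - ε) / n b * Δ ≤ ∫ x in Ioc a b, f x ∂μ := by
      calc (h' ξ - ε) / n b * Δ = ∫ x in Ioc a b, ((h' ξ - ε) / n b) ∂μ := by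
            rw [setIntegral_const, measureReal_def, hμab, smul_eq_mul, mul_comm]
        _ ≤ ∫ x in Ioc a b, f x ∂μ :=
            setIntegral_mono_on (integrable_const _).integrableOn hf_int.integrableOn hmeas
              (fun x hx => (hpw x hx).1)
    -- incentive bounds
    obtain ⟨hk1, hk2⟩ := key2 a ha b hb hab
    rw [hξ] at hk1 hk2
    have hub : g (T a) - g (T b) ≤ h' ξ * Δ / n a := by
      rw [le_div_iff₀ hna]; linarith
    have hlb : h' ξ * Δ / n b ≤ g (T a) - g (T b) := by
      rw [div_le_iff₀ hnb]; linarith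
    -- combine
    have e1 : h' ξ * Δ / n a = h' ξ * Δ * (1 / n a) := by ring
    have e2 : h' ξ * Δ / n b = h' ξ * Δ * (1 / n b) := by ring
    have e3 : (h' ξ + ε) / n a * Δ = h' ξ * Δ * (1 / n a) + ε * Δ * (1 / n a) := by ring
    have e4 : (h' ξ - ε) / n b * Δ = h' ξ * Δ * (1 / n b) - ε * Δ * (1 / n b) := by ring
    have e5 : ε * Δ / n A = ε * Δ * (1 / n A) := by ring
    have hinv1 : 1 / n b ≤ 1 / n a := by apply one_div_le_one_div_of_le hna hnab
    have hinv2 : 1 / n a ≤ 1 / n A := by apply one_div_le_one_div_of_le hnA hnAa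
    have hinv3 : 0 < 1 / n b := by positivity
    have t1 : 0 ≤ (C - h' ξ) * Δ * (1 / n a - 1 / n b) := by
      apply mul_nonneg (mul_nonneg (by linarith) hΔ0); linarith
    have t2 : 0 ≤ ε * Δ * (1 / n A - 1 / n a) := by
      apply mul_nonneg (mul_nonneg hε.le hΔ0); linarith
    have t3 : 0 ≤ ε * Δ * (1 / n A - 1 / n b) := by
      apply mul_nonneg (mul_nonneg hε.le hΔ0); linarith
    rw [e3] at hIub
    rw [e4] at hIlb
    rw [e1] at hub
    rw [e2] at hlb
    rw [abs_le, e5]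
    constructor
    · linarith only [hIlb, hub, t1, t3]
    · linarith only [hIub, hlb, t1, t2]
  -- ### final assembly
  intro v hv
  obtain ⟨hvA, hvB⟩ := hv
  have hvmem : v ∈ Icc A B := ⟨hvA, hvB⟩
  have hnv : 0 < n v := hnpos v hvmem
  have hnB : 0 < n B := hnpos B hBmem
  have hnAv : n A ≤ n v := hn.monotoneOn hABmem hvmem hvA
  have hnvB : n v ≤ n B := hn.monotoneOn hvmem hBmem hvB
  -- replace integrand by f
  have hInt_eq : (∫ x in Ioc v B, h' (G x) / n x ∂μ) = ∫ x in Ioc v B, f x ∂μ := by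
    refine setIntegral_congr_fun measurableSet_Ioc fun x hx => ?_
    exact (hf_eq x ⟨le_trans hvA hx.1.le, hx.2⟩).symm
  rw [hInt_eq]
  -- suffices: |I - g (T v)| ≤ ε' for all ε' > 0
  have main : ∀ ε' > (0:ℝ), |(∫ x in Ioc v B, f x ∂μ) - g (T v)| ≤ ε' := by
    intro ε' hε'
    have hε : (0:ℝ) < ε' * n A / 4 := by positivity
    obtain ⟨δ, hδpos, hpiece⟩ := piece (ε' * n A / 4) hε
    by_cases hGv1 : G v = 1
    · -- degenerate case: G v = 1
      have h0 := hpiece v B hvmem hBmem hvB (by rw [hGB, hGv1]; simp; exact hδpos.le)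
      rw [huB, sub_zero] at h0
      rw [hGB, hGv1, sub_self] at h0
      have h00 : |(∫ x in Ioc v B, f x ∂μ) - g (T v)| ≤ 0 := by
        calc |(∫ x in Ioc v B, f x ∂μ) - g (T v)|
            ≤ C * 0 * (1 / n v - 1 / n B) + ε' * n A / 4 * 0 / n A := h0
          _ = 0 := by ring
      linarith
    · have hGvlt : G v < 1 := lt_of_le_of_ne (hG1 v) hGv1
      set m : ℝ := min δ (ε' * n A / (4 * (C + 1))) with hm_def
      have hm_pos : 0 < m := lt_min hδpos (by positivity)
      set k : ℕ := ⌈(1 - G v) / m⌉₊ with hk_def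
      have hk_pos : 0 < k := by
        rw [hk_def]
        exact Nat.ceil_pos.2 (div_pos (by linarith) hm_pos)
      have hk0 : (0:ℝ) < k := by exact_mod_cast hk_pos
      set Δ₀ : ℝ := (1 - G v) / k with hΔ₀_def
      have hΔ₀pos : 0 < Δ₀ := div_pos (by linarith) hk0
      have hΔ₀m : Δ₀ ≤ m := by
        rw [hΔ₀_def, div_le_iff₀ hk0]
        have h1 : (1 - G v) / m ≤ (k:ℝ) := by rw [hk_def]; exact Nat.le_ceil _
        calc 1 - G v = (1 - G v) / m * m := by field_simp
          _ ≤ (k:ℝ) * m := mul_le_mul_of_nonneg_right h1 hm_pos.le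
          _ = m * k := mul_comm _ _
      have hkΔ₀ : (k:ℝ) * Δ₀ = 1 - G v := by rw [hΔ₀_def]; field_simp
      -- partition
      have hex : ∀ i : ℕ, ∃ x, x ∈ Icc v B ∧ (i ≤ k → G x = G v + i * Δ₀) := by
        intro i
        by_cases hi : i ≤ k
        · have h1 : G v + i * Δ₀ ∈ Icc (G v) (G B) := by
            constructor
            · nlinarith [Nat.cast_nonneg (α := ℝ) i, hΔ₀pos]
            · rw [hGB]
              have : (i:ℝ) ≤ k := by exact_mod_cast hi
              nlinarith
          obtain ⟨x, hx1, hx2⟩ := intermediate_value_Icc hvB (hGcont.continuousOn) h1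
          exact ⟨x, hx1, fun _ => hx2⟩
        · exact ⟨v, ⟨le_rfl, hvB⟩, fun h => absurd h hi⟩
      choose q hq1 hq2 using hex
      set p : ℕ → ℝ := fun i => if i = 0 then v else if i < k then q i else B with hp_def
      have hp0 : p 0 = v := by simp [hp_def]
      have hpk : p k = B := by
        simp only [hp_def]
        rw [if_neg hk_pos.ne', if_neg (lt_irrefl k)]
      have hpmem : ∀ i ≤ k, p i ∈ Icc v B := by
        intro i hi
        simp only [hp_def]
        split_ifs with h1 h2
        · exact ⟨le_rfl, hvB⟩
        · exact hq1 i
        · exact ⟨hvB, le_rfl⟩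
      have hpG : ∀ i ≤ k, G (p i) = G v + i * Δ₀ := by
        intro i hi
        simp only [hp_def]
        split_ifs with h1 h2
        · rw [h1]; simp
        · exact hq2 i hi
        · have hik : i = k := le_antisymm hi (not_lt.1 h2)
          rw [hik, hGB]
          linarith [hkΔ₀]
      have hpmono : ∀ i < k, p i ≤ p (i + 1) := by
        intro i hi
        by_contra hc
        push_neg at hc
        have h1 : G (p (i+1)) ≤ G (p i) := hGmono hc.le
        rw [hpG i hi.le, hpG (i+1) hi] at h1
        push_cast at h1
        nlinarith
      have hpchain : ∀ i ≤ k, p 0 ≤ p i := by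
        intro i hi
        induction i with
        | zero => exact le_rfl
        | succ j ih =>
          exact le_trans (ih (le_trans (Nat.le_succ j) hi)) (hpmono j (Nat.lt_of_succ_le hi))
      -- split the integral
      have hsplit : ∀ l : ℕ, l ≤ k →
          (∫ x in Ioc (p 0) (p l), f x ∂μ) = ∑ i ∈ Finset.range l, ∫ x in Ioc (p i) (p (i+1)), f x ∂μ := by
        intro l hl
        induction l with
        | zero => simp [Set.Ioc_self]
        | succ j ih =>
          have hjk : j ≤ k := le_trans (Nat.le_succ j) hl
          have hjlt : j < k := Nat.lt_of_succ_le hl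
          rw [Finset.sum_range_succ, ← ih hjk,
            ← setIntegral_union (Ioc_disjoint_Ioc_of_le le_rfl) measurableSet_Ioc
              hf_int.integrableOn hf_int.integrableOn,
            Ioc_union_Ioc_eq_Ioc (hpchain j hjk) (hpmono j hjlt)]
      have hIsum := hsplit k le_rfl
      rw [hp0, hpk] at hIsum
      -- telescoping sums
      have husum : ∑ i ∈ Finset.range k, (g (T (p i)) - g (T (p (i+1)))) = g (T v) := by
        rw [Finset.sum_range_sub' (fun i => g (T (p i))) k, hp0, hpk, huB, sub_zero]
      have hnsum : ∑ i ∈ Finset.range k, (1 / n (p i) - 1 / n (p (i+1))) = 1 / n v - 1 / n B := by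
        rw [Finset.sum_range_sub' (fun i => 1 / n (p i)) k, hp0, hpk]
      -- per-piece estimates
      have hpmemAB : ∀ i ≤ k, p i ∈ Icc A B := fun i hi =>
        ⟨le_trans hvA (hpmem i hi).1, (hpmem i hi).2⟩
      have hGdiff : ∀ i < k, G (p (i+1)) - G (p i) = Δ₀ := by
        intro i hi
        rw [hpG i hi.le, hpG (i+1) hi]
        push_cast; ring
      have hbound : ∀ i < k, |(∫ x in Ioc (p i) (p (i+1)), f x ∂μ) - (g (T (p i)) - g (T (p (i+1))))| ≤
          C * Δ₀ * (1 / n (p i) - 1 / n (p (i+1))) + (ε' * n A / 4) * Δ₀ / n A := by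
        intro i hi
        have h1 := hpiece (p i) (p (i+1)) (hpmemAB i hi.le) (hpmemAB (i+1) hi) (hpmono i hi)
          (by rw [hGdiff i hi]; exact le_trans hΔ₀m (min_le_left _ _))
        rwa [hGdiff i hi] at h1
      -- sum up
      have htotal : |(∫ x in Ioc v B, f x ∂μ) - g (T v)| ≤
          C * Δ₀ * (1 / n v - 1 / n B) + (k:ℝ) * ((ε' * n A / 4) * Δ₀ / n A) := by
        rw [hIsum, ← husum, ← Finset.sum_sub_distrib]
        calc |∑ i ∈ Finset.range k, ((∫ x in Ioc (p i) (p (i+1)), f x ∂μ) - (g (T (p i)) - g (T (p (i+1)))))|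
            ≤ ∑ i ∈ Finset.range k, |(∫ x in Ioc (p i) (p (i+1)), f x ∂μ) - (g (T (p i)) - g (T (p (i+1))))| :=
              Finset.abs_sum_le_sum_abs _ _
          _ ≤ ∑ i ∈ Finset.range k, (C * Δ₀ * (1 / n (p i) - 1 / n (p (i+1))) + (ε' * n A / 4) * Δ₀ / n A) :=
              Finset.sum_le_sum (fun i hi => hbound i (Finset.mem_range.1 hi))
          _ = C * Δ₀ * (1 / n v - 1 / n B) + (k:ℝ) * ((ε' * n A / 4) * Δ₀ / n A) := by
              rw [Finset.sum_add_distrib, ← Finset.mul_sum, hnsum, Finset.sum_const,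
                Finset.card_range, nsmul_eq_mul]
      -- numeric estimate
      have hfinal : C * Δ₀ * (1 / n v - 1 / n B) + (k:ℝ) * ((ε' * n A / 4) * Δ₀ / n A) ≤ ε' := by
        have hb1 : Δ₀ ≤ ε' * n A / (4 * (C + 1)) := le_trans hΔ₀m (min_le_right _ _)
        have hb2 : 1 / n v - 1 / n B ≤ 1 / n A := by
          have h1 : 1 / n v ≤ 1 / n A := one_div_le_one_div_of_le hnA hnAv
          have h2 : 0 < 1 / n B := by positivity
          linarith
        have hb3 : 0 ≤ 1 / n v - 1 / n B := by
          have := one_div_le_one_div_of_le hnv hnvB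
          linarith
        have hterm1 : C * Δ₀ * (1 / n v - 1 / n B) ≤ ε' / 2 := by
          calc C * Δ₀ * (1 / n v - 1 / n B) ≤ C * (ε' * n A / (4 * (C + 1))) * (1 / n A) := by
                apply mul_le_mul (mul_le_mul_of_nonneg_left hb1 hC0) hb2 hb3
                positivity
            _ = C * ε' / (4 * (C + 1)) * (n A / n A) := by ring
            _ = C * ε' / (4 * (C + 1)) := by rw [div_self hnA.ne', mul_one]
            _ ≤ ε' / 2 := by
                rw [div_le_div_iff₀ (by positivity) (by norm_num : (0:ℝ) < 2)]
                nlinarith [mul_nonneg hC0 hε'.le]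
        have hterm2 : (k:ℝ) * ((ε' * n A / 4) * Δ₀ / n A) ≤ ε' / 2 := by
          have e1 : (k:ℝ) * ((ε' * n A / 4) * Δ₀ / n A) = (ε' / 4) * ((k:ℝ) * Δ₀) * (n A / n A) := by
            ring
          rw [e1, div_self hnA.ne', mul_one, hkΔ₀]
          nlinarith [hG0 v, hGvlt, hε']
        linarith
      exact le_trans htotal hfinal
  -- conclude equality
  by_contra hne
  have habs : 0 < |(∫ x in Ioc v B, f x ∂μ) - g (T v)| := by
    rw [abs_pos, sub_ne_zero]
    exact fun hc => hne hc.symm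
  have := main (|(∫ x in Ioc v B, f x ∂μ) - g (T v)| / 2) (by linarith)
  linarith
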